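/- Let $p \geq 1$, let $a : \mathbb{R}^n \to \mathbb{R}^m$ be an affine map, let $B \subset \mathbb{R}^n$ be a ball and $E \subset B$ a Borel set with $|E| > 0$. Then $\left(\frac{1}{|E|}\int_E |a(x)|^p\,dx\right)^{1/p} \geq C^{-1} \|a\|_{L^\infty(B)} \cdot \frac{|E|}{|B|}$, where $C \geq 1$ is a constant depending only on $n$, $m$, $p$. -/

import Mathlib

open MeasureTheory Metric Set
open scoped ENNReal RealInnerProductSpace NNReal

lemma coord_abs_le_norm {n : ℕ} (x : EuclideanSpace ℝ (Fin n)) (i : Fin n) : |x i| ≤ ‖x‖ := by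
  rw [EuclideanSpace.norm_eq, ← Real.sqrt_sq_eq_abs]
  apply Real.sqrt_le_sqrt
  have : x i ^ 2 = ‖x i‖ ^ 2 := by rw [Real.norm_eq_abs, sq_abs]
  rw [this]
  exact Finset.single_le_sum (fun j _ => sq_nonneg ‖x j‖) (Finset.mem_univ i)

lemma slab_vol {n : ℕ} [NeZero n] (u : EuclideanSpace ℝ (Fin n)) (hu : ‖u‖ = 1)
    (s δ R : ℝ) (hδ : 0 ≤ δ) (hR : 0 ≤ R) :
    volume {v : EuclideanSpace ℝ (Fin n) | |⟪u, v⟫ - s| ≤ δ ∧ ‖v‖ ≤ R}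
      ≤ ENNReal.ofReal (2 * δ) * ENNReal.ofReal (2 * R) ^ (n - 1) := by
  have hcard : Module.finrank ℝ (EuclideanSpace ℝ (Fin n)) = Fintype.card (Fin n) := by
    simp [finrank_euclideanSpace_fin]
  have horth : Orthonormal ℝ (({0} : Set (Fin n)).restrict (fun _ : Fin n => u)) := by
    constructor
    · intro i
      exact hu
    · intro i j hij
      exact absurd (Subtype.ext (i.2.trans j.2.symm)) hij
  obtain ⟨b, hb⟩ := horth.exists_orthonormalBasis_extension_of_card_eq hcard
  have hb0 : b 0 = u := hb 0 rfl
  set I : Fin n → Set ℝ := fun i => if i = 0 then Icc (s - δ) (s + δ) else Icc (-R) R with hI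
  have hImeas : MeasurableSet (Set.pi univ I) := by
    apply MeasurableSet.univ_pi
    intro i
    by_cases h : i = 0 <;> simp [hI, h]
  have hMP : MeasurePreserving (fun v => (MeasurableEquiv.toLp 2 (Fin n → ℝ)).symm (b.repr v))
      volume volume :=
    (EuclideanSpace.volume_preserving_symm_measurableEquiv_toLp (Fin n)).comp b.measurePreserving_repr
  have hsub : {v : EuclideanSpace ℝ (Fin n) | |⟪u, v⟫ - s| ≤ δ ∧ ‖v‖ ≤ R}
      ⊆ (fun v => (MeasurableEquiv.toLp 2 (Fin n → ℝ)).symm (b.repr v)) ⁻¹' (Set.pi univ I) := by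
    rintro v ⟨h1, h2⟩ i _
    show b.repr v i ∈ I i
    by_cases h : i = 0
    · subst h
      rw [b.repr_apply_apply, hb0]
      simp only [hI, if_pos rfl, Set.mem_Icc]
      constructor <;> [linarith [abs_le.1 h1 |>.2, abs_le.1 h1 |>.1]; linarith [abs_le.1 h1 |>.2]]
    · have : |b.repr v i| ≤ R := by
        calc |b.repr v i| ≤ ‖b.repr v‖ := coord_abs_le_norm _ _
        _ = ‖v‖ := b.repr.norm_map v
        _ ≤ R := h2
      simp only [hI, if_neg h, Set.mem_Icc]
      exact abs_le.1 this
  calc volume {v : EuclideanSpace ℝ (Fin n) | |⟪u, v⟫ - s| ≤ δ ∧ ‖v‖ ≤ R}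
      ≤ volume ((fun v => (MeasurableEquiv.toLp 2 (Fin n → ℝ)).symm (b.repr v)) ⁻¹' (Set.pi univ I)) :=
        measure_mono hsub
    _ = volume (Set.pi univ I) := hMP.measure_preimage hImeas.nullMeasurableSet
    _ = ∏ i, volume (I i) := volume_pi_pi I
    _ ≤ ENNReal.ofReal (2 * δ) * ENNReal.ofReal (2 * R) ^ (n - 1) := by
        rw [← Finset.mul_prod_erase Finset.univ _ (Finset.mem_univ (0 : Fin n))]
        have h0 : volume (I 0) = ENNReal.ofReal (2 * δ) := by
          simp only [hI, if_pos rfl, Real.volume_Icc]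
          congr 1; ring
        have hrest : ∏ i ∈ Finset.univ.erase (0 : Fin n), volume (I i)
            = ENNReal.ofReal (2 * R) ^ (n - 1) := by
          rw [Finset.prod_congr rfl (fun i hi => ?_), Finset.prod_const,
            Finset.card_erase_of_mem (Finset.mem_univ _), Finset.card_univ, Fintype.card_fin]
          have hi0 : i ≠ 0 := (Finset.mem_erase.1 hi).1
          simp only [hI, if_neg hi0, Real.volume_Icc]
          congr 1; ring
        rw [h0, hrest]

set_option maxHeartbeats 2000000 in
theorem statement0 (n m : ℕ) (p : ℝ) (hp : 1 ≤ p) :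
    ∃ C : ℝ, 1 ≤ C ∧
      ∀ (a : EuclideanSpace ℝ (Fin n) →ᵃ[ℝ] EuclideanSpace ℝ (Fin m))
        (x₀ : EuclideanSpace ℝ (Fin n)) (R : ℝ), 0 < R →
        ∀ E : Set (EuclideanSpace ℝ (Fin n)), MeasurableSet E → E ⊆ ball x₀ R →
          0 < volume E →
          C⁻¹ * (⨆ x ∈ ball x₀ R, ‖a x‖) * ((volume E).toReal / (volume (ball x₀ R)).toReal)
            ≤ ((volume E).toReal⁻¹ * ∫ x in E, ‖a x‖ ^ p) ^ (1 / p) := by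
  have hp0 : 0 < p := lt_of_lt_of_le one_pos hp
  set cn : ℝ := (volume (ball (0 : EuclideanSpace ℝ (Fin n)) 1)).toReal with hcn
  have hcn_pos : 0 < cn := ENNReal.toReal_pos (measure_ball_pos volume 0 one_pos).ne'
    measure_ball_lt_top.ne
  set K : ℝ := 2 + 4 * 2 ^ n / cn with hKdef
  have hK2 : 2 ≤ K := le_add_of_nonneg_right (by positivity)
  have hKpos : 0 < K := lt_of_lt_of_le two_pos hK2
  have hKge : 4 * 2 ^ n / cn ≤ K := by
    rw [hKdef]; linarith
  clear_value cn
  clear_value K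
  have hC1 : (1:ℝ) ≤ 4 * K := by nlinarith
  refine ⟨4 * K, hC1, ?_⟩
  intro a x₀ R hR E hEmeas hEsub hEpos
  -- basic measure facts
  have hBfin : volume (ball x₀ R) < ⊤ := measure_ball_lt_top
  have hEfin : volume E < ⊤ := lt_of_le_of_lt (measure_mono hEsub) hBfin
  set vE : ℝ := (volume E).toReal with hvEdef
  set vB : ℝ := (volume (ball x₀ R)).toReal with hvBdef
  have hvE : 0 < vE := ENNReal.toReal_pos hEpos.ne' hEfin.ne
  have hvB : 0 < vB := ENNReal.toReal_pos (measure_ball_pos volume x₀ hR).ne' hBfin.ne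
  have hvEB : vE ≤ vB := ENNReal.toReal_mono hBfin.ne (measure_mono hEsub)
  clear_value vE vB
  set M : ℝ := ⨆ x ∈ ball x₀ R, ‖a x‖ with hMdef
  -- the integrand is nonnegative, so RHS ≥ 0 always
  have hint_nonneg : (0:ℝ) ≤ vE⁻¹ * ∫ x in E, ‖a x‖ ^ p := by
    apply mul_nonneg (inv_nonneg.2 hvE.le)
    exact integral_nonneg fun x => Real.rpow_nonneg (norm_nonneg _) p
  have hRHS_nonneg : (0:ℝ) ≤ (vE⁻¹ * ∫ x in E, ‖a x‖ ^ p) ^ (1/p) :=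
    Real.rpow_nonneg hint_nonneg _
  by_cases hM : M ≤ 0
  · have h1 : (4*K)⁻¹ * M * (vE / vB) ≤ 0 := by
      have h2 : (0:ℝ) ≤ (4*K)⁻¹ := by positivity
      have h3 : (0:ℝ) ≤ vE / vB := by positivity
      have h4 : (4*K)⁻¹ * M * (vE / vB) = ((4*K)⁻¹ * (vE / vB)) * M := by ring
      rw [h4]
      exact mul_nonpos_iff.2 (Or.inl ⟨mul_nonneg h2 h3, hM⟩)
    exact le_trans h1 hRHS_nonneg
  push_neg at hM
  -- maximum over the closed ball
  have hacont : Continuous fun x => ‖a x‖ := (a.continuous_of_finiteDimensional).norm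
  obtain ⟨y, hy, hymax⟩ := (isCompact_closedBall x₀ R).exists_isMaxOn
    ⟨x₀, mem_closedBall_self hR.le⟩ hacont.continuousOn
  set M' : ℝ := ‖a y‖ with hM'def
  have hMM' : M ≤ M' := by
    rw [hMdef]
    apply Real.iSup_le _ (norm_nonneg _)
    intro x
    apply Real.iSup_le _ (norm_nonneg _)
    intro hx
    exact hymax (ball_subset_closedBall hx)
  have hM' : 0 < M' := lt_of_lt_of_le hM hMM'
  have hay : a y ≠ 0 := by
    intro h; rw [hM'def, h, norm_zero] at hM'; exact lt_irrefl _ hM'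
  set u : EuclideanSpace ℝ (Fin m) := ‖a y‖⁻¹ • a y with hudef
  have hu : ‖u‖ = 1 := norm_smul_inv_norm hay
  set w : EuclideanSpace ℝ (Fin n) := (LinearMap.adjoint a.linear) u with hwdef
  set β : ℝ := ⟪u, a x₀⟫ with hβdef
  have hf : ∀ x, ⟪u, a x⟫ = β + ⟪w, x - x₀⟫ := by
    intro x
    have h1 : a x = a.linear (x - x₀) + a x₀ := by
      have := a.linearMap_vsub x x₀
      simp only [vsub_eq_sub] at this
      rw [this]; abel
    rw [h1, inner_add_right, hwdef, LinearMap.adjoint_inner_left, hβdef]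
    ring
  have habs : ∀ x, |⟪u, a x⟫| ≤ ‖a x‖ := by
    intro x
    calc |⟪u, a x⟫| ≤ ‖u‖ * ‖a x‖ := abs_real_inner_le_norm u (a x)
      _ = ‖a x‖ := by rw [hu, one_mul]
  have hfy : ⟪u, a y⟫ = M' := by
    rw [hudef, real_inner_smul_left, real_inner_self_eq_norm_mul_norm, hM'def]
    field_simp
  have hynorm : ‖y - x₀‖ ≤ R := by rwa [← mem_closedBall_iff_norm]
  have hwinner : ∀ v : EuclideanSpace ℝ (Fin n), |⟪w, v⟫| ≤ ‖w‖ * ‖v‖ :=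
    fun v => abs_real_inner_le_norm w v
  clear_value M M' u w β
  have hβbound : M' ≤ |β| + ‖w‖ * R := by
    have h1 : M' = β + ⟪w, y - x₀⟫ := by rw [← hfy, hf y]
    have h2 : |⟪w, y - x₀⟫| ≤ ‖w‖ * R :=
      le_trans (hwinner _) (mul_le_mul_of_nonneg_left hynorm (norm_nonneg _))
    have := abs_le.1 h2
    have hb := le_abs_self β
    nlinarith [neg_abs_le β]
  -- choose ε
  set ε : ℝ := vE / (2 * K * vB) with hεdef
  clear_value ε
  have hε_pos : 0 < ε := by rw [hεdef]; positivity
  have hε_le : ε ≤ 1/4 := by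
    rw [hεdef, div_le_iff₀ (by positivity)]
    nlinarith [mul_le_mul_of_nonneg_right hK2 hvB.le]
  -- the small set S
  set S : Set (EuclideanSpace ℝ (Fin n)) := {x | x ∈ ball x₀ R ∧ ‖a x‖ ≤ ε * M'} with hSdef
  have hSmeas : MeasurableSet S := by
    apply MeasurableSet.inter measurableSet_ball
    exact measurableSet_le hacont.measurable measurable_const
  -- key estimate: volume S ≤ ofReal (vE / 2)
  have hkey : volume S ≤ ENNReal.ofReal (vE / 2) := by
    by_cases hw : ‖w‖ * R ≤ M' / 4
    · have : S = ∅ := by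
        ext x
        simp only [hSdef, Set.mem_setOf_eq, Set.mem_empty_iff_false, iff_false, not_and]
        intro hxball hxle
        have hxnorm : ‖x - x₀‖ ≤ R := by
          rw [← mem_closedBall_iff_norm]; exact ball_subset_closedBall hxball
        have h1 : |⟪w, x - x₀⟫| ≤ ‖w‖ * R :=
          le_trans (hwinner _) (mul_le_mul_of_nonneg_left hxnorm (norm_nonneg _))
        have h2 : |⟪u, a x⟫| ≤ ‖a x‖ := habs x
        have h3 : ⟪u, a x⟫ = β + ⟪w, x - x₀⟫ := hf x
        have h4 := abs_le.1 h1
        have h5 := abs_le.1 h2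
        have h6 : ε * M' ≤ M' / 4 := by nlinarith
        have hb := abs_le.1 (le_refl |β|)
        -- |β| ≥ M' - ‖w‖R ≥ 3M'/4 ; |⟪u,ax⟫| ≥ |β| - ‖w‖R ≥ M'/2
        rcases le_or_gt 0 β with hbs | hbs
        · nlinarith [le_abs_self β, abs_nonneg β, abs_of_nonneg hbs]
        · nlinarith [abs_of_neg hbs]
      rw [this, measure_empty]
      exact zero_le
    · push_neg at hw
      have hwpos : 0 < ‖w‖ := by
        rcases (norm_nonneg w).lt_or_eq with h | h
        · exact h
        · exfalso; rw [← h, zero_mul] at hw; nlinarith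
      have hw0 : w ≠ 0 := by intro h; rw [h, norm_zero] at hwpos; exact lt_irrefl _ hwpos
      haveI : Nontrivial (EuclideanSpace ℝ (Fin n)) := nontrivial_of_ne w 0 hw0
      haveI : NeZero n := by
        constructor
        intro h
        subst h
        exact hw0 (Subsingleton.elim w 0)
      set u' : EuclideanSpace ℝ (Fin n) := ‖w‖⁻¹ • w with hu'def
      have hu' : ‖u'‖ = 1 := norm_smul_inv_norm hw0
      set δ : ℝ := 4 * ε * R with hδdef
      have hδpos : 0 < δ := by positivity
      set T : Set (EuclideanSpace ℝ (Fin n)) :=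
        {v | |⟪u', v⟫ - (-(β / ‖w‖))| ≤ δ ∧ ‖v‖ ≤ R} with hTdef
      have hsub : S ⊆ (fun v => -x₀ + v) ⁻¹' T := by
        rintro x ⟨hxball, hxle⟩
        have hxnorm : ‖x - x₀‖ ≤ R := by
          rw [← mem_closedBall_iff_norm]; exact ball_subset_closedBall hxball
        have h2 : |β + ⟪w, x - x₀⟫| ≤ ε * M' := le_trans (by rw [← hf x]; exact habs x) hxle
        constructor
        · have hiu : ⟪u', x - x₀⟫ = ‖w‖⁻¹ * ⟪w, x - x₀⟫ := real_inner_smul_left _ _ _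
          have heq : ⟪u', -x₀ + x⟫ - (-(β / ‖w‖)) = ‖w‖⁻¹ * (β + ⟪w, x - x₀⟫) := by
            rw [neg_add_eq_sub, hiu]
            field_simp
            ring
          rw [heq, abs_mul, abs_of_nonneg (inv_nonneg.2 hwpos.le)]
          have : ‖w‖⁻¹ * (ε * M') ≤ δ := by
            rw [hδdef]
            rw [inv_mul_le_iff₀ hwpos]
            nlinarith
          calc ‖w‖⁻¹ * |β + ⟪w, x - x₀⟫| ≤ ‖w‖⁻¹ * (ε * M') := by
                apply mul_le_mul_of_nonneg_left h2 (inv_nonneg.2 hwpos.le)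
            _ ≤ δ := this
        · show ‖-x₀ + x‖ ≤ R
          rw [neg_add_eq_sub]
          exact hxnorm
      calc volume S ≤ volume ((fun v => -x₀ + v) ⁻¹' T) := measure_mono hsub
        _ = volume T := measure_preimage_add volume (-x₀) T
        _ ≤ ENNReal.ofReal (2 * δ) * ENNReal.ofReal (2 * R) ^ (n - 1) :=
            slab_vol u' hu' _ δ R hδpos.le hR.le
        _ ≤ ENNReal.ofReal (vE / 2) := by
            rw [← ENNReal.ofReal_pow (by positivity), ← ENNReal.ofReal_mul (by positivity)]
            apply ENNReal.ofReal_le_ofReal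
            -- real inequality: 2δ(2R)^(n-1) ≤ vE/2
            have hn1 : n - 1 + 1 = n := Nat.succ_pred_eq_of_pos (Nat.pos_of_ne_zero (NeZero.ne n))
            have hpow : (2*R) ^ (n-1) * (2*R) = (2*R) ^ n := by
              rw [← pow_succ, hn1]
            have hRn : (0:ℝ) < R ^ n := by positivity
            have hvBeq : vB = R ^ n * cn := by
              rw [hvBdef, Measure.addHaar_ball_of_pos volume x₀ hR, ENNReal.toReal_mul,
                ENNReal.toReal_ofReal (by positivity), finrank_euclideanSpace_fin, ← hcn]
            have h2Rn : (2*R)^n = 2^n * R^n := mul_pow 2 R n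
            have key : 2 * δ * (2*R)^(n-1) = 4 * ε * ((2*R)^(n-1) * (2*R)) := by
              rw [hδdef]; ring
            rw [key, hpow, h2Rn]
            -- 4 ε 2^n R^n ≤ vE/2 where ε = vE/(2K vB), vB = R^n cn
            rw [hεdef, hvBeq]
            have hKge' : 4 * 2 ^ n ≤ K * cn := by
              rw [div_le_iff₀ hcn_pos] at hKge
              linarith
            have h01 : 4 * (vE / (2 * K * (R ^ n * cn))) * (2 ^ n * R ^ n)
                = (4 * 2^n / cn) * vE / (2 * K) := by
              field_simp
            rw [h01]
            rw [div_le_div_iff₀ (by positivity) (by norm_num)]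
            calc 4 * 2 ^ n / cn * vE * 2 ≤ K * (vE * 2) := by
                  nlinarith [mul_le_mul_of_nonneg_right hKge hvE.le]
              _ = vE * (2 * K) := by ring
  -- integral estimates
  set g : EuclideanSpace ℝ (Fin n) → ℝ := fun x => ‖a x‖ ^ p with hgdef
  have hgcont : Continuous g := hacont.rpow_const (fun x => Or.inr hp0.le)
  have hgint : IntegrableOn g E := by
    apply IntegrableOn.mono_set _ (hEsub.trans ball_subset_closedBall)
    exact hgcont.continuousOn.integrableOn_compact (isCompact_closedBall x₀ R)
  have hgnonneg : ∀ x, 0 ≤ g x := fun x => Real.rpow_nonneg (norm_nonneg _) p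
  have hESmeas : MeasurableSet (E \ S) := hEmeas.diff hSmeas
  have hESfin : volume (E \ S) ≠ ⊤ := (lt_of_le_of_lt (measure_mono diff_subset) hEfin).ne
  have hlow : ∀ x ∈ E \ S, (ε * M') ^ p ≤ g x := by
    rintro x ⟨hxE, hxS⟩
    have hxball : x ∈ ball x₀ R := hEsub hxE
    have : ¬ ‖a x‖ ≤ ε * M' := fun h => hxS ⟨hxball, h⟩
    exact Real.rpow_le_rpow (by positivity) (le_of_not_ge this) hp0.le
  have hint1 : (ε * M') ^ p * (volume (E \ S)).toReal ≤ ∫ x in E \ S, g x :=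
    setIntegral_ge_of_const_le_real hESmeas hESfin hlow (hgint.mono_set diff_subset)
  have hint2 : ∫ x in E \ S, g x ≤ ∫ x in E, g x := by
    apply setIntegral_mono_set hgint
    · exact ae_of_all _ hgnonneg
    · exact HasSubset.Subset.eventuallyLE diff_subset
  -- measure of E \ S is at least vE/2
  have hES_half : vE / 2 ≤ (volume (E \ S)).toReal := by
    have h1 : volume E ≤ volume (E \ S) + volume S :=
      le_trans (measure_mono (subset_diff_union E S)) (measure_union_le _ _)
    have hSfin : volume S ≠ ⊤ := (lt_of_le_of_lt hkey ENNReal.ofReal_lt_top).ne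
    have h2 : vE ≤ (volume (E \ S)).toReal + (volume S).toReal := by
      rw [hvEdef, ← ENNReal.toReal_add hESfin hSfin]
      exact ENNReal.toReal_mono (by simp [ENNReal.add_ne_top, hESfin, hSfin]) h1
    have h3 : (volume S).toReal ≤ vE / 2 :=
      ENNReal.toReal_le_of_le_ofReal (by positivity) hkey
    linarith
  have hintE : (ε * M') ^ p * (vE / 2) ≤ ∫ x in E, g x := by
    calc (ε * M') ^ p * (vE / 2) ≤ (ε * M') ^ p * (volume (E \ S)).toReal := by
          apply mul_le_mul_of_nonneg_left hES_half (Real.rpow_nonneg (by positivity) _)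
      _ ≤ ∫ x in E \ S, g x := hint1
      _ ≤ ∫ x in E, g x := hint2
  have hbase : (ε * M') ^ p / 2 ≤ vE⁻¹ * ∫ x in E, g x := by
    have := mul_le_mul_of_nonneg_left hintE (inv_nonneg.2 hvE.le)
    calc (ε * M') ^ p / 2 = vE⁻¹ * ((ε * M') ^ p * (vE / 2)) := by
          field_simp
      _ ≤ vE⁻¹ * ∫ x in E, g x := this
  -- final
  have hfinal : ε * M' / 2 ≤ (vE⁻¹ * ∫ x in E, g x) ^ (1/p) := by
    have h1 : ((ε * M') ^ p / 2) ^ (1/p) ≤ (vE⁻¹ * ∫ x in E, g x) ^ (1/p) :=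
      Real.rpow_le_rpow (by positivity) hbase (by positivity)
    have h2 : ((ε * M') ^ p / 2) ^ (1/p) = (ε * M') / 2 ^ (1/p) := by
      rw [Real.div_rpow (Real.rpow_nonneg (by positivity) _) (by norm_num),
        ← Real.rpow_mul (by positivity), mul_one_div_cancel hp0.ne', Real.rpow_one]
    have h3 : (2:ℝ) ^ (1/p) ≤ 2 := by
      calc (2:ℝ) ^ (1/p) ≤ 2 ^ (1:ℝ) := by
            apply Real.rpow_le_rpow_of_exponent_le (by norm_num)
            rw [div_le_one hp0]; exact hp
        _ = 2 := Real.rpow_one 2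
    have h4 : (2:ℝ) ^ (1/p) > 0 := Real.rpow_pos_of_pos (by norm_num) _
    have h5 : ε * M' / 2 ≤ ε * M' / 2 ^ (1/p) := by
      gcongr <;> first | positivity | exact h3
    linarith [h2 ▸ h1]
  calc (4*K)⁻¹ * M * (vE / vB) ≤ (4*K)⁻¹ * M' * (vE / vB) := by
        apply mul_le_mul_of_nonneg_right _ (by positivity)
        apply mul_le_mul_of_nonneg_left hMM' (by positivity)
    _ = ε * M' / 2 := by
        rw [hεdef]
        field_simp
        ring
    _ ≤ (vE⁻¹ * ∫ x in E, g x) ^ (1/p) := hfinal
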